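/- Let A be an n×n complex matrix and f_1, …, f_m vectors. The unique solution of the initial value problem u'(t) + A u(t) = Σ_{k=1}^m f_k t^{k-1}/(k-1)!, u(0) = u_0, is given by u(t) = φ_0(-tA) u_0 + Σ_{k=1}^m φ_k(-tA) f_k t^k, where φ_k are the matrix φ-functions defined via φ_0(z) = e^z and φ_{k+1}(z) = (φ_k(z) - 1/k!)/z. -/

import Mathlib

open intervalIntegral NormedSpace

section Aux

attribute [local instance] Matrix.linftyOpNormedRing Matrix.linftyOpNormedAlgebra

variable {n : ℕ}

noncomputable def mulVecL (n : ℕ) :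
    Matrix (Fin n) (Fin n) ℂ →L[ℝ] (Fin n → ℂ) →L[ℝ] (Fin n → ℂ) :=
  LinearMap.toContinuousLinearMap
    { toFun := fun M => LinearMap.toContinuousLinearMap
        ((Matrix.mulVecLin M).restrictScalars ℝ)
      map_add' := by
        intro M N; ext v i; simp [Matrix.add_mulVec]
      map_smul' := by
        intro r M; ext v i; simp [Matrix.smul_mulVec] }

@[simp] theorem mulVecL_apply (M : Matrix (Fin n) (Fin n) ℂ) (v : Fin n → ℂ) :
    mulVecL n M v = M.mulVec v := rfl

end Aux

theorem matrix_ode_phi_solution_formula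
    (n m : ℕ) (A : Matrix (Fin n) (Fin n) ℂ) (f : Fin m → (Fin n → ℂ))
    (u : ℝ → (Fin n → ℂ)) (u₀ : Fin n → ℂ)
    (hu0 : u 0 = u₀)
    (hode : ∀ t : ℝ, HasDerivAt u
      (-(A.mulVec (u t)) + ∑ k : Fin m, ((t ^ (k : ℕ) / (Nat.factorial k) : ℝ)) • f k) t) :
    ∀ t : ℝ, u t =
      (NormedSpace.exp (-(t • A))).mulVec u₀ +
      ∑ k : Fin m, (t ^ ((k : ℕ) + 1)) •
        (∫ s in (0:ℝ)..1,
          ((s ^ (k : ℕ) / (Nat.factorial k) : ℝ)) •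
            (NormedSpace.exp (-((1 - s) * t) • A)).mulVec (f k)) := by
  intro t
  letI : NormedRing (Matrix (Fin n) (Fin n) ℂ) := Matrix.linftyOpNormedRing
  letI : NormedAlgebra ℝ (Matrix (Fin n) (Fin n) ℂ) := Matrix.linftyOpNormedAlgebra
  letI : NormedAlgebra ℂ (Matrix (Fin n) (Fin n) ℂ) := Matrix.linftyOpNormedAlgebra
  letI : NormedAlgebra ℚ (Matrix (Fin n) (Fin n) ℂ) := Matrix.linftyOpNormedAlgebra
  have hexp : (NormedSpace.exp : Matrix (Fin n) (Fin n) ℂ → _) = NormedSpace.exp :=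
    rfl
  set B := mulVecL n with hB
  set g : ℝ → Matrix (Fin n) (Fin n) ℂ := fun s => exp (s • A) with hg
  set F : ℝ → (Fin n → ℂ) := fun s =>
    ∑ k : Fin m, ((s ^ (k : ℕ) / (Nat.factorial k) : ℝ)) • f k with hF
  have hg_cont : Continuous g := exp_continuous.comp (continuous_id.smul continuous_const)
  have hg_deriv : ∀ s : ℝ, HasDerivAt g (A * g s) s := fun s =>
    hasDerivAt_exp_smul_const' (𝕂 := ℝ) A s
  have hgA_comm : ∀ s : ℝ, A * g s = g s * A := fun s =>
    (((Commute.refl A).smul_right s).exp_right).eq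
  have hF_cont : Continuous F := by
    refine continuous_finset_sum (f := fun (k : Fin m) (s : ℝ) => ((s ^ (k : ℕ) / (Nat.factorial k) : ℝ)) • f k) _ fun k _ => ?_
    exact ((continuous_pow (k : ℕ)).div_const _).smul continuous_const
  set w : ℝ → (Fin n → ℂ) := fun s => B (g s) (u s) with hw
  have hw_deriv : ∀ s : ℝ, HasDerivAt w (B (g s) (F s)) s := by
    intro s
    have hc : HasDerivAt (fun s => B (g s)) (B (A * g s)) s :=
      B.hasFDerivAt.comp_hasDerivAt s (hg_deriv s)
    have := hc.clm_apply (hode s)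
    refine this.congr_deriv ?_
    rw [hgA_comm s]
    simp only [B, mulVecL_apply, map_add, map_neg, ← Matrix.mulVec_mulVec]
    simp only [hF]
    abel
  have hint_cont : Continuous fun s => B (g s) (F s) :=
    (B.continuous.comp hg_cont).clm_apply hF_cont
  have key : (∫ s in (0:ℝ)..t, B (g s) (F s)) = w t - w 0 :=
    intervalIntegral.integral_eq_sub_of_hasDerivAt (fun s _ => hw_deriv s)
      (hint_cont.intervalIntegrable _ _)
  have hw0 : w 0 = u₀ := by
    simp [w, g, hu0, B]
  have hwt : w t = u₀ + ∫ s in (0:ℝ)..t, B (g s) (F s) := by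
    rw [key, hw0]; abel
  -- invert
  have hinv : ∀ x : Fin n → ℂ, B (exp (-(t • A))) (B (g t) x) = x := by
    intro x
    have hcomm : Commute (-(t • A)) (t • A) := (Commute.refl (t • A)).neg_left
    have : exp (-(t • A)) * exp (t • A) = 1 := by
      refine (exp_add_of_commute hcomm).symm.trans ?_
      simp
    simp only [B, mulVecL_apply, Matrix.mulVec_mulVec, g, this, Matrix.one_mulVec]
  have hut : u t = B (exp (-(t • A))) (w t) := by
    rw [show w t = B (g t) (u t) from rfl, hinv]
  rw [hut, hwt, map_add]
  congr 1
  -- now the integral part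
  have hsummand_cont : ∀ k : Fin m, Continuous fun s : ℝ =>
      ((s ^ (k : ℕ) / (Nat.factorial k) : ℝ)) • B (g s) (f k) := by
    intro k
    exact ((continuous_pow (k : ℕ)).div_const _).smul
      ((B.continuous.comp hg_cont).clm_apply continuous_const)
  have hsplit : (∫ s in (0:ℝ)..t, B (g s) (F s)) =
      ∑ k : Fin m, ∫ s in (0:ℝ)..t,
        ((s ^ (k : ℕ) / (Nat.factorial k) : ℝ)) • B (g s) (f k) := by
    rw [← intervalIntegral.integral_finset_sum]
    · congr 1; funext s
      simp only [hF, map_sum, map_smul]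
    · exact fun k _ => (hsummand_cont k).intervalIntegrable _ _
  rw [hsplit, map_sum]
  refine Finset.sum_congr rfl fun k _ => ?_
  rw [← ContinuousLinearMap.intervalIntegral_comp_comm _
    ((hsummand_cont k).intervalIntegrable _ _)]
  have hEcomm : ∀ s : ℝ, B (exp (-(t • A))) (B (g s) (f k)) =
      (exp ((s - t) • A)).mulVec (f k) := by
    intro s
    have hcomm : Commute (-(t • A)) (s • A) := ((Commute.refl A).smul_right s).smul_left t |>.neg_left
    simp only [B, mulVecL_apply, Matrix.mulVec_mulVec, g]
    have h2 : -(t • A) + s • A = (s - t) • A := by module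
    have h3 : exp (-(t • A)) * exp (s • A) = exp (-(t • A) + s • A) :=
      (exp_add_of_commute hcomm).symm
    rw [h3, h2]
  have hre : (∫ s in (0:ℝ)..t, B (exp (-(t • A)))
        (((s ^ (k : ℕ) / (Nat.factorial k) : ℝ)) • B (g s) (f k))) =
      ∫ s in (0:ℝ)..t, ((s ^ (k : ℕ) / (Nat.factorial k) : ℝ)) •
        (exp ((s - t) • A)).mulVec (f k) := by
    congr 1; funext s
    rw [map_smul, hEcomm s]
  rw [hre]
  -- substitution s = t * σ
  have hsub := intervalIntegral.smul_integral_comp_mul_left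
    (fun s => ((s ^ (k : ℕ) / (Nat.factorial k) : ℝ)) •
      (exp ((s - t) • A)).mulVec (f k)) (a := 0) (b := 1) t
  rw [mul_zero, mul_one] at hsub
  rw [← hsub]
  have heq : ∀ σ : ℝ, (((t * σ) ^ (k : ℕ) / (Nat.factorial k) : ℝ)) •
      (exp ((t * σ - t) • A)).mulVec (f k) =
      (t ^ (k : ℕ)) • (((σ ^ (k : ℕ) / (Nat.factorial k) : ℝ)) •
        (exp (-((1 - σ) * t) • A)).mulVec (f k)) := by
    intro σ
    rw [smul_smul]
    rw [show (t * σ) ^ (k : ℕ) / ((Nat.factorial k : ℝ)) =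
      t ^ (k : ℕ) * (σ ^ (k : ℕ) / (Nat.factorial k)) by rw [mul_pow]; ring,
      show t * σ - t = -((1 - σ) * t) by ring]
  calc t • ∫ σ in (0:ℝ)..1, (((t * σ) ^ (k : ℕ) / (Nat.factorial k) : ℝ)) •
        (exp ((t * σ - t) • A)).mulVec (f k)
      = t • ∫ σ in (0:ℝ)..1, (t ^ (k : ℕ)) • (((σ ^ (k : ℕ) / (Nat.factorial k) : ℝ)) •
        (exp (-((1 - σ) * t) • A)).mulVec (f k)) := by
        rw [intervalIntegral.integral_congr (fun σ _ => heq σ)]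
    _ = (t ^ ((k : ℕ) + 1)) • ∫ σ in (0:ℝ)..1, (((σ ^ (k : ℕ) / (Nat.factorial k) : ℝ)) •
        (exp (-((1 - σ) * t) • A)).mulVec (f k)) := by
        rw [intervalIntegral.integral_smul, smul_smul, pow_succ']
    _ = (t ^ ((k : ℕ) + 1)) • ∫ σ in (0:ℝ)..1, (((σ ^ (k : ℕ) / (Nat.factorial k) : ℝ)) •
        (NormedSpace.exp (-((1 - σ) * t) • A)).mulVec (f k)) := by rw [hexp]
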